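/- Let λ be a nonzero real number and define r(y) = y − (λ²/2)·y³ + (λ²/2)·y⁵ (the exact reduced map on the approximate center manifold of the fixed point A = (0,0) for γ = 0). Then 0 is an asymptotically stable fixed point of r in the discrete-dynamics sense: there exists δ > 0 such that for every y₀ with |y₀| < δ, the sequence of iterates rⁿ(y₀) tends to 0 as n → ∞, and moreover |r(y)| ≤ |y| for all |y| < δ. -/
import Mathlib


/-- The exact reduced map on the approximate center manifold of A = (0,0) for γ = 0. -/
noncomputable def r (lam y : ℝ) : ℝ := y - (lam^2/2)*y^3 + (lam^2/2)*y^5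

/-- For λ ≠ 0, the origin is an asymptotically stable fixed point of the reduced map r. -/
theorem stmt_13 (lam : ℝ) (h : lam ≠ 0) :
    ∃ δ > 0, (∀ y : ℝ, |y| < δ → |r lam y| ≤ |y|) ∧
      ∀ y₀ : ℝ, |y₀| < δ →
        Filter.Tendsto (fun n => (r lam)^[n] y₀) Filter.atTop (nhds 0) := by
  have hl : 0 < lam ^ 2 := by positivity
  have hlam : 0 < |lam| := abs_pos.mpr h
  set δ : ℝ := min (1 / 2) (1 / |lam|) with hδdef
  have hδpos : 0 < δ := lt_min (by norm_num) (by positivity)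
  set k : ℝ := 3 * lam ^ 2 / 8 with hkdef
  have hk : 0 < k := by positivity
  have key : ∀ y : ℝ, |y| < δ → |r lam y| ≤ |y| - k * |y| ^ 3 := by
    intro y hy
    have h1 : |y| < 1 / 2 := lt_of_lt_of_le hy (min_le_left _ _)
    have h2 : |y| < 1 / |lam| := lt_of_lt_of_le hy (min_le_right _ _)
    have h2' : |y| * |lam| < 1 := by
      rw [lt_div_iff₀ hlam] at h2; exact h2
    have hsq : y ^ 2 = |y| ^ 2 := (sq_abs y).symm
    have hy0 : 0 ≤ |y| := abs_nonneg y
    have hsq1 : y ^ 2 < 1 / 4 := by nlinarith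
    have hsq2 : lam ^ 2 * y ^ 2 < 1 := by
      have he : lam ^ 2 * y ^ 2 = (|y| * |lam|) ^ 2 := by
        rw [mul_pow, sq_abs, sq_abs]; ring
      rw [he]
      nlinarith [mul_nonneg hy0 hlam.le]
    set t : ℝ := lam ^ 2 / 2 * y ^ 2 * (1 - y ^ 2) with htdef
    have ht0 : 0 ≤ t := by
      rw [htdef]
      exact mul_nonneg (mul_nonneg (by positivity) (sq_nonneg y))
        (by nlinarith : (0:ℝ) ≤ 1 - y ^ 2)
    have ht2 : t ≤ 1 / 2 := by rw [htdef]; nlinarith [sq_nonneg y, sq_nonneg (y^2)]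
    have hreq : r lam y = y * (1 - t) := by rw [r, htdef]; ring
    have habs : |r lam y| = |y| * (1 - t) := by
      rw [hreq, abs_mul, abs_of_nonneg (by linarith : (0:ℝ) ≤ 1 - t)]
    rw [habs]
    have htk : k * y ^ 2 ≤ t := by rw [htdef, hkdef]; nlinarith [sq_nonneg y]
    have hcube : |y| ^ 3 = |y| * y ^ 2 := by rw [hsq]; ring
    rw [hcube]
    nlinarith [mul_le_mul_of_nonneg_left htk hy0]
  have keyle : ∀ y : ℝ, |y| < δ → |r lam y| ≤ |y| := by
    intro y hy
    have := key y hy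
    nlinarith [pow_nonneg (abs_nonneg y) 3]
  refine ⟨δ, hδpos, keyle, ?_⟩
  intro y₀ hy₀
  set f : ℕ → ℝ := fun n => (r lam)^[n] y₀ with hfdef
  have hstep : ∀ n, f (n + 1) = r lam (f n) := fun n =>
    Function.iterate_succ_apply' (r lam) n y₀
  set a : ℕ → ℝ := fun n => |f n| with hadef
  have hlt : ∀ n, a n < δ := by
    intro n
    induction n with
    | zero => simpa [hadef, hfdef] using hy₀
    | succ n ih =>
      have : a (n + 1) ≤ a n := by
        simp only [hadef, hstep]; exact keyle _ ih
      linarith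
  have hanti : Antitone a := antitone_nat_of_succ_le (fun n => by
    simp only [hadef, hstep]; exact keyle _ (hlt n))
  have hbdd : BddBelow (Set.range a) := ⟨0, by rintro x ⟨n, rfl⟩; exact abs_nonneg _⟩
  have htend : Filter.Tendsto a Filter.atTop (nhds (⨅ n, a n)) :=
    tendsto_atTop_ciInf hanti hbdd
  set L : ℝ := ⨅ n, a n with hLdef
  have hL0 : 0 ≤ L := le_ciInf (fun n => abs_nonneg _)
  have hLle : ∀ n, L ≤ a n := fun n => ciInf_le hbdd n
  have hdec : ∀ n, a (n + 1) ≤ a n - k * L ^ 3 := by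
    intro n
    have h1 : a (n + 1) ≤ a n - k * (a n) ^ 3 := by
      simp only [hadef, hstep]; exact key _ (hlt n)
    have h2 : L ^ 3 ≤ (a n) ^ 3 := pow_le_pow_left₀ hL0 (hLle n) 3
    nlinarith
  have htend1 : Filter.Tendsto (fun n => a (n + 1)) Filter.atTop (nhds L) :=
    htend.comp (Filter.tendsto_add_atTop_nat 1)
  have htend2 : Filter.Tendsto (fun n => a n - k * L ^ 3) Filter.atTop
      (nhds (L - k * L ^ 3)) := htend.sub_const _
  have hfin : L ≤ L - k * L ^ 3 :=
    le_of_tendsto_of_tendsto' htend1 htend2 hdec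
  have hLzero : L = 0 := by
    by_contra hne
    have hLpos : 0 < L := lt_of_le_of_ne hL0 (Ne.symm hne)
    nlinarith [pow_pos hLpos 3]
  rw [hLzero] at htend
  exact squeeze_zero_norm (fun n => le_of_eq (Real.norm_eq_abs _)) htend
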